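/- Let P be a graphoid over V and let H be a DAG that is Markovian with respect to P (every d-separation in H is an independence in P). If π is a causal order of H (every ancestor of j in H precedes j in π), then the edge set of the DAG G_π induced from π by the RU construction is a subset of the edge set of H. Moreover, if H is SGS-minimal (no proper subgraph of H is Markovian), then G_π = H. -/

import Mathlib

open Classical
attribute [local instance] Classical.propDecidable

variable {V : Type} [Fintype V] [DecidableEq V]

/-- A conditional independence model over variable set `V`:
`I A B C` means `A` is independent of `B` given `C`. -/
abbrev IndepModel (V : Type) :=
  Finset V → Finset V → Finset V → Prop

/-- Semigraphoid axioms. -/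
structure Semigraphoid (I : IndepModel V) : Prop where
  symm : ∀ A B C, I A B C → I B A C
  decomposition : ∀ A B W C, I A (B ∪ W) C → I A B C ∧ I A W C
  weakUnion : ∀ A B W C, I A (B ∪ W) C → I A B (C ∪ W)
  contraction : ∀ A B W C, I A B C → I A W (C ∪ B) → I A (B ∪ W) C

/-- Graphoid axioms. -/
structure Graphoid (I : IndepModel V) extends Semigraphoid I : Prop where
  intersection : ∀ A B W C, I A B (C ∪ W) → I A W (C ∪ B) → I A (B ∪ W) C

/-- Compositional graphoid axioms. -/
structure CompGraphoid (I : IndepModel V) extends Graphoid I : Prop where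
  composition : ∀ A B W C, I A B C → I A W C → I A (B ∪ W) C

/-- `M` is a Markov blanket of `X` relative to `Z`. -/
def MarkovBlanket (I : IndepModel V) (X : V) (Z M : Finset V) : Prop :=
  M ⊆ Z ∧ I {X} (Z \ M) M

/-- `M` is a Markov boundary (minimal Markov blanket) of `X` relative to `Z`. -/
def MarkovBoundary (I : IndepModel V) (X : V) (Z M : Finset V) : Prop :=
  MarkovBlanket I X Z M ∧ ∀ M' ⊂ M, ¬ I {X} (Z \ M') M'

/-- A directed graph on `V`, given by its finite set of directed edges. -/
abbrev EdgeSet (V : Type) := Finset (V × V)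

def Adj (E : EdgeSet V) (a b : V) : Prop := (a, b) ∈ E

/-- Acyclicity: no vertex reaches itself by a nontrivial directed path. -/
def IsDAG (E : EdgeSet V) : Prop := ∀ v, ¬ Relation.TransGen (Adj E) v v

def parents (E : EdgeSet V) (v : V) : Finset V :=
  (E.filter (fun e => e.2 = v)).image Prod.fst

def IsCollider (E : EdgeSet V) (x y z : V) : Prop := Adj E x y ∧ Adj E z y

/-- The middle vertex `y` of a path triple `x - y - z` does not block the path
given conditioning set `C`. -/
def ActiveTriple (E : EdgeSet V) (C : Finset V) (x y z : V) : Prop :=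
  (IsCollider E x y z ∧ ∃ d ∈ C, Relation.ReflTransGen (Adj E) y d) ∨
  (¬ IsCollider E x y z ∧ y ∉ C)

/-- `a` and `b` are d-connected given `C` in the graph `E`. -/
def DConn (E : EdgeSet V) (C : Finset V) (a b : V) : Prop :=
  ∃ p : List V, 2 ≤ p.length ∧ p.head? = some a ∧ p.getLast? = some b ∧
    (∀ (i : ℕ) (h : i + 1 < p.length),
      Adj E (p.get ⟨i, by omega⟩) (p.get ⟨i + 1, h⟩) ∨
      Adj E (p.get ⟨i + 1, h⟩) (p.get ⟨i, by omega⟩)) ∧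
    (∀ (i : ℕ) (h : i + 2 < p.length),
      ActiveTriple E C (p.get ⟨i, by omega⟩) (p.get ⟨i + 1, by omega⟩) (p.get ⟨i + 2, h⟩))

/-- `A` and `B` are d-separated given `C`. -/
def DSep (E : EdgeSet V) (A B C : Finset V) : Prop :=
  ∀ a ∈ A, ∀ b ∈ B, ¬ DConn E C a b

def PairwiseDisjoint3 (A B C : Finset V) : Prop :=
  Disjoint A B ∧ Disjoint A C ∧ Disjoint B C

/-- `I(G) ⊆ I(P)`: every d-separation of the graph is an independence of `I`. -/
def Markovian (E : EdgeSet V) (I : IndepModel V) : Prop :=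
  ∀ A B C, PairwiseDisjoint3 A B C → DSep E A B C → I A B C

/-- `I(P) ⊆ I(G)`: every independence of `I` is a d-separation of the graph. -/
def FaithfulTo (E : EdgeSet V) (I : IndepModel V) : Prop :=
  ∀ A B C, PairwiseDisjoint3 A B C → I A B C → DSep E A B C

/-- `I(E) ⊆ I(E')` : every d-separation statement of `E` holds in `E'`. -/
def ISub (E E' : EdgeSet V) : Prop :=
  ∀ A B C, PairwiseDisjoint3 A B C → DSep E A B C → DSep E' A B C

/-- Markov equivalence: same d-separation statements. -/
def MEquiv (E E' : EdgeSet V) : Prop := ISub E E' ∧ ISub E' E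

/-- Markovian DAGs. -/
def CMC (I : IndepModel V) : Set (EdgeSet V) := {G | IsDAG G ∧ Markovian G I}

/-- Faithful DAGs. -/
def CFC (I : IndepModel V) : Set (EdgeSet V) := {G | G ∈ CMC I ∧ FaithfulTo G I}

/-- SGS-minimal DAGs: Markovian with no Markovian proper subgraph. -/
def SGSmin (I : IndepModel V) : Set (EdgeSet V) :=
  {G | G ∈ CMC I ∧ ∀ G' ⊆ G, G' ∈ CMC I → G' = G}

/-- Frugal DAGs: Markovian with minimal edge count. -/
def Fr (I : IndepModel V) : Set (EdgeSet V) :=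
  {G | G ∈ CMC I ∧ ∀ G' ∈ CMC I, G.card ≤ G'.card}

/-- Uniquely frugal DAGs. -/
def uFr (I : IndepModel V) : Set (EdgeSet V) :=
  {G | G ∈ Fr I ∧ ∀ G' ∈ Fr I, MEquiv G' G}

/-- P-minimal DAGs: Markovian `G` such that no Markovian `G'` has `I(G) ⊊ I(G')`. -/
def Pm (I : IndepModel V) : Set (EdgeSet V) :=
  {G | G ∈ CMC I ∧ ∀ G' ∈ CMC I, ISub G G' → ISub G' G}

/-- Uniquely P-minimal DAGs. -/
def uPm (I : IndepModel V) : Set (EdgeSet V) :=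
  {G | G ∈ Pm I ∧ ∀ G' ∈ Pm I, MEquiv G' G}

/-- A list is a permutation of the vertices of `V`. -/
def IsPermList (π : List V) : Prop := π.Nodup ∧ ∀ v : V, v ∈ π

/-- The set of vertices preceding `k` in the permutation `π`. -/
def pre (π : List V) (k : V) : Finset V := (π.takeWhile (fun x => x != k)).toFinset

/-- The DAG induced from a permutation `π` by the Raskutti–Uhler (RU) construction:
`j → k` is an edge iff `j` precedes `k` in `π` and `X_j` is dependent on `X_k`
given all other predecessors of `k`. -/
noncomputable def RUedges (I : IndepModel V) (π : List V) : EdgeSet V :=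
  Finset.univ.filter
    (fun e => e.1 ∈ pre π e.2 ∧ ¬ I {e.1} {e.2} ((pre π e.2).erase e.1))

/-- `j → k` is a covered edge of `E`. -/
def CoveredEdge (E : EdgeSet V) (j k : V) : Prop :=
  (j, k) ∈ E ∧ parents E j = (parents E k).erase j

/-- `j → k` is a singular edge of `E`: no directed path from `j` to `k` other than
the edge itself. -/
def SingularEdge (E : EdgeSet V) (j k : V) : Prop :=
  (j, k) ∈ E ∧
    ∀ i, Relation.TransGen (Adj E) j i → Relation.TransGen (Adj E) i k → i = j ∨ i = k

/-- `π` is a causal order of the graph `E`: every ancestor of a vertex precedes it. -/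
def CausalOrder (E : EdgeSet V) (π : List V) : Prop :=
  IsPermList π ∧ ∀ a b, Relation.TransGen (Adj E) a b → π.idxOf a < π.idxOf b

/-- Two permutations differ by one adjacent transposition. -/
def AdjTrans (π τ : List V) : Prop :=
  ∃ (δ₁ δ₂ : List V) (a b : V), π = δ₁ ++ a :: b :: δ₂ ∧ τ = δ₁ ++ b :: a :: δ₂

/-- The non-descendants of `j` in the graph `E`. -/
noncomputable def nonDesc (E : EdgeSet V) (j : V) : Finset V :=
  Finset.univ.filter (fun i => ¬ Relation.ReflTransGen (Adj E) j i)


/-! ### Auxiliary machinery -/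

set_option linter.unusedSectionVars false

section PathMachinery

variable {E : EdgeSet V} {C : Finset V}

lemma not_adj_rev (hdag : IsDAG E) {a b : V} (h : Adj E a b) : ¬ Adj E b a :=
  fun h' => hdag a ((Relation.TransGen.single h).trans (Relation.TransGen.single h'))

/-- Undirected adjacency. -/
def adj2 (E : EdgeSet V) (x y : V) : Prop := Adj E x y ∨ Adj E y x

lemma adj2_symm {x y : V} (h : adj2 E x y) : adj2 E y x := h.elim .inr .inl

lemma activeTriple_symm {x y z : V} (h : ActiveTriple E C x y z) :
    ActiveTriple E C z y x := by
  unfold ActiveTriple IsCollider at *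
  rcases h with ⟨⟨h1, h2⟩, h3⟩ | ⟨h1, h2⟩
  · exact Or.inl ⟨⟨h2, h1⟩, h3⟩
  · exact Or.inr ⟨fun ⟨a, b⟩ => h1 ⟨b, a⟩, h2⟩

/-- Recursive predicate: `p` is an active path given `C`. -/
def AP (E : EdgeSet V) (C : Finset V) : List V → Prop
  | x :: y :: z :: t => adj2 E x y ∧ ActiveTriple E C x y z ∧ AP E C (y :: z :: t)
  | [x, y] => adj2 E x y
  | _ => False

lemma AP.two_le : ∀ {p : List V}, AP E C p → 2 ≤ p.length
  | [], h => by simp [AP] at h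
  | [_], h => by simp [AP] at h
  | _ :: _ :: t, _ => by simp only [List.length_cons]; omega

lemma exists_cons_cons {p : List V} (h : 2 ≤ p.length) : ∃ a b t, p = a :: b :: t := by
  match p, h with
  | a :: b :: t, _ => exact ⟨a, b, t, rfl⟩

lemma AP.head_adj2 : ∀ {y z : V} {t : List V}, AP E C (y :: z :: t) → adj2 E y z
  | _, _, [], h => h
  | _, _, _ :: _, h => h.1

/-- Indexed form of active paths (matches the definition of `DConn`). -/
def APidx (E : EdgeSet V) (C : Finset V) (p : List V) : Prop :=
  2 ≤ p.length ∧
    (∀ (i : ℕ) (h : i + 1 < p.length), adj2 E (p[i]'(by omega)) (p[i+1]'h)) ∧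
    (∀ (i : ℕ) (h : i + 2 < p.length),
      ActiveTriple E C (p[i]'(by omega)) (p[i+1]'(by omega)) (p[i+2]'h))

lemma AP_iff_APidx : ∀ {p : List V}, AP E C p ↔ APidx E C p := by
  intro p
  induction p with
  | nil => simp [AP, APidx]
  | cons x q ih =>
    cases q with
    | nil => simp [AP, APidx]
    | cons y t =>
      cases t with
      | nil =>
        constructor
        · intro h
          refine ⟨by simp, ?_, ?_⟩
          · intro i hi
            simp only [List.length_cons, List.length_nil] at hi
            cases i with
            | zero => exact h
            | succ j => omega
          · intro i hi
            simp only [List.length_cons, List.length_nil] at hi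
            omega
        · intro ⟨h1, h2, h3⟩
          exact h2 0 (by simp)
      | cons z t =>
        constructor
        · intro ⟨h1, h2, h3⟩
          rcases ih.mp h3 with ⟨g1, g2, g3⟩
          refine ⟨by simp, ?_, ?_⟩
          · intro i hi
            cases i with
            | zero => exact h1
            | succ j =>
              exact g2 j (by simp only [List.length_cons] at hi ⊢; omega)
          · intro i hi
            cases i with
            | zero => exact h2
            | succ j =>
              exact g3 j (by simp only [List.length_cons] at hi ⊢; omega)
        · intro ⟨h1, h2, h3⟩
          refine ⟨h2 0 (by simp only [List.length_cons]; omega),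
                  h3 0 (by simp only [List.length_cons]; omega), ih.mpr ?_⟩
          refine ⟨by simp only [List.length_cons]; omega, ?_, ?_⟩
          · intro i hi
            have := h2 (i+1) (by simp only [List.length_cons] at hi ⊢; omega)
            simpa using this
          · intro i hi
            have := h3 (i+1) (by simp only [List.length_cons] at hi ⊢; omega)
            simpa using this

lemma dconn_iff {a b : V} :
    DConn E C a b ↔ ∃ p, AP E C p ∧ p.head? = some a ∧ p.getLast? = some b := by
  unfold DConn
  constructor
  · rintro ⟨p, h1, h2, h3, h4, h5⟩
    refine ⟨p, AP_iff_APidx.mpr ⟨h1, ?_, ?_⟩, h2, h3⟩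
    · intro i hi; simpa [adj2, Adj, List.get_eq_getElem] using h4 i hi
    · intro i hi; simpa [List.get_eq_getElem] using h5 i hi
  · rintro ⟨p, hp, h2, h3⟩
    rcases AP_iff_APidx.mp hp with ⟨g1, g2, g3⟩
    refine ⟨p, g1, h2, h3, ?_, ?_⟩
    · intro i hi; simpa [adj2, Adj, List.get_eq_getElem] using g2 i hi
    · intro i hi; simpa [List.get_eq_getElem] using g3 i hi


lemma exists_append_pair {p : List V} (h : 2 ≤ p.length) : ∃ l x y, p = l ++ [x, y] := by
  obtain ⟨y, x, t, hr⟩ := exists_cons_cons (p := p.reverse) (by simpa using h)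
  refine ⟨t.reverse, x, y, ?_⟩
  have := congrArg List.reverse hr
  simpa using this

lemma head?_append_cons (l : List V) (x : V) (t t' : List V) :
    (l ++ x :: t).head? = (l ++ x :: t').head? := by
  cases l <;> simp

lemma AP_suffix : ∀ (l : List V) {p : List V}, AP E C (l ++ p) → 2 ≤ p.length → AP E C p := by
  intro l
  induction l with
  | nil => intro p h _; simpa using h
  | cons a l ih =>
    intro p h hp
    obtain ⟨c₁, c₂, rest, hsh⟩ := exists_cons_cons (p := l ++ p)
      (by simp only [List.length_append]; omega)
    rw [List.cons_append, hsh] at h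
    exact ih (hsh ▸ h.2.2) hp

lemma AP_glue : ∀ (l : List V) {x y z : V} {r : List V},
    AP E C (l ++ [x, y]) → AP E C (y :: z :: r) → ActiveTriple E C x y z →
    AP E C (l ++ x :: y :: z :: r) := by
  intro l
  induction l with
  | nil =>
    intro x y z r h1 h2 h3
    exact ⟨h1, h3, h2⟩
  | cons a l ih =>
    intro x y z r h1 h2 h3
    have h1' : AP E C (l ++ [x, y]) := by
      refine AP_suffix [a] ?_ (by simp)
      simpa using h1
    have hr := ih h1' h2 h3
    obtain ⟨c₁, c₂, r1, r2, e1, e2⟩ :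
        ∃ c₁ c₂ r1 r2, l ++ [x, y] = c₁ :: c₂ :: r1 ∧ l ++ x :: y :: z :: r = c₁ :: c₂ :: r2 := by
      match l with
      | [] => exact ⟨x, y, [], z :: r, rfl, rfl⟩
      | [b] => exact ⟨b, x, [y], y :: z :: r, rfl, rfl⟩
      | b :: c :: l' => exact ⟨b, c, _, _, rfl, rfl⟩
    rw [List.cons_append, e1] at h1
    rw [List.cons_append, e2]
    exact ⟨h1.1, h1.2.1, e2 ▸ hr⟩

lemma adj2_mono {E E' : EdgeSet V} (hsub : E ⊆ E') {x y : V} (h : adj2 E x y) : adj2 E' x y :=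
  h.imp (fun a => hsub a) (fun a => hsub a)

lemma triple_mono {E E' : EdgeSet V} (hsub : E ⊆ E') (hdag : IsDAG E') {x y z : V}
    (hxy : adj2 E x y) (hyz : adj2 E y z) (h : ActiveTriple E C x y z) :
    ActiveTriple E' C x y z := by
  rcases h with ⟨⟨h1, h2⟩, d, hd, hdd⟩ | ⟨h1, h2⟩
  · exact Or.inl ⟨⟨hsub h1, hsub h2⟩, d, hd,
      Relation.ReflTransGen.mono (r := Adj E) (p := Adj E') (fun a b hab => hsub hab) _ _ hdd⟩
  · refine Or.inr ⟨?_, h2⟩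
    rintro ⟨c1, c2⟩
    refine h1 ⟨?_, ?_⟩
    · rcases hxy with h | h
      · exact h
      · exact absurd c1 (not_adj_rev hdag (hsub h))
    · rcases hyz with h | h
      · exact absurd c2 (not_adj_rev hdag (hsub h))
      · exact h

lemma AP_mono {E E' : EdgeSet V} (hsub : E ⊆ E') (hdag : IsDAG E') :
    ∀ p, AP E C p → AP E' C p
  | [], h => by simp [AP] at h
  | [_], h => by simp [AP] at h
  | [x, y], h => adj2_mono hsub h
  | x :: y :: z :: t, h =>
    ⟨adj2_mono hsub h.1,
     triple_mono hsub hdag h.1 h.2.2.head_adj2 h.2.1,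
     AP_mono hsub hdag (y :: z :: t) h.2.2⟩

lemma getElem_idx_congr {l : List V} {i j : ℕ} (h : i = j) (hi : i < l.length) :
    l[i]'hi = l[j]'(h ▸ hi) := by subst h; rfl

lemma APidx_reverse {p : List V} (h : APidx E C p) : APidx E C p.reverse := by
  obtain ⟨h1, h2, h3⟩ := h
  refine ⟨by simpa using h1, ?_, ?_⟩
  · intro i hi
    simp only [List.length_reverse] at hi
    rw [List.getElem_reverse, List.getElem_reverse]
    rw [getElem_idx_congr (show p.length - 1 - i = (p.length - 2 - i) + 1 by omega),
        getElem_idx_congr (show p.length - 1 - (i+1) = p.length - 2 - i by omega)]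
    exact adj2_symm (h2 (p.length - 2 - i) (by omega))
  · intro i hi
    simp only [List.length_reverse] at hi
    rw [List.getElem_reverse, List.getElem_reverse, List.getElem_reverse]
    rw [getElem_idx_congr (show p.length - 1 - i = (p.length - 3 - i) + 2 by omega),
        getElem_idx_congr (show p.length - 1 - (i+1) = (p.length - 3 - i) + 1 by omega),
        getElem_idx_congr (show p.length - 1 - (i+2) = p.length - 3 - i by omega)]
    exact activeTriple_symm (h3 (p.length - 3 - i) (by omega))

lemma DConn.symm {a b : V} (h : DConn E C a b) : DConn E C b a := by
  rcases dconn_iff.mp h with ⟨p, hp, hh, hl⟩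
  refine dconn_iff.mpr ⟨p.reverse, AP_iff_APidx.mpr (APidx_reverse (AP_iff_APidx.mp hp)), ?_, ?_⟩
  · rw [List.head?_reverse]; exact hl
  · rw [List.getLast?_reverse]; exact hh

lemma DSep.symm {A B C : Finset V} (h : DSep E A B C) : DSep E B A C :=
  fun b hb a ha hc => h a ha b hb hc.symm

lemma dconn_pair {a b : V} (h : adj2 E a b) : DConn E C a b :=
  dconn_iff.mpr ⟨[a, b], h, rfl, rfl⟩

lemma dconn_mono {E E' : EdgeSet V} (hsub : E ⊆ E') (hdag : IsDAG E') {a b : V}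
    (h : DConn E C a b) : DConn E' C a b := by
  rcases dconn_iff.mp h with ⟨p, hp, hh, hl⟩
  exact dconn_iff.mpr ⟨p, AP_mono hsub hdag p hp, hh, hl⟩

lemma DConn.cons (hdag : IsDAG E) {v y b : V} (hvy : Adj E y v) (hyC : y ∉ C)
    (h : DConn E C y b) : DConn E C v b := by
  rcases dconn_iff.mp h with ⟨p, hp, hh, hl⟩
  obtain ⟨y', z, t, rfl⟩ := exists_cons_cons hp.two_le
  have hy' : y = y' := by symm; simpa using hh
  subst hy'
  refine dconn_iff.mpr ⟨v :: y :: z :: t, ⟨Or.inr hvy, ?_, hp⟩, rfl, by simpa using hl⟩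
  exact Or.inr ⟨fun hc => not_adj_rev hdag hvy hc.1, hyC⟩

lemma sink_rtg {v d : V} (hsink : ∀ w, ¬ Adj E v w) (h : Relation.ReflTransGen (Adj E) v d) :
    d = v := by
  rcases h.cases_head with h | ⟨c, hc, _⟩
  · exact h.symm
  · exact absurd hc (hsink c)

lemma AP_insert_sink {v : V} (hsink : ∀ w, ¬ Adj E v w) (hv : v ∉ C) :
    ∀ p, AP E C p → AP E (insert v C) p
  | [], h => by simp [AP] at h
  | [_], h => by simp [AP] at h
  | [x, y], h => h
  | x :: y :: z :: t, h => by
    refine ⟨h.1, ?_, AP_insert_sink hsink hv (y :: z :: t) h.2.2⟩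
    rcases h.2.1 with ⟨col, d, hd, hdd⟩ | ⟨nc, hyC⟩
    · exact Or.inl ⟨col, d, Finset.mem_insert_of_mem hd, hdd⟩
    · refine Or.inr ⟨nc, ?_⟩
      intro hins
      rcases Finset.mem_insert.mp hins with rfl | hmem
      · have hxy : Adj E x y := h.1.resolve_right (hsink x)
        have hzy : Adj E z y := h.2.2.head_adj2.resolve_left (hsink z)
        exact nc ⟨hxy, hzy⟩
      · exact hyC hmem

lemma dconn_glue_sink (hdag : IsDAG E) {v a b : V} (hsink : ∀ w, ¬ Adj E v w) (hvC : v ∉ C)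
    (h1 : DConn E C a v) (h2 : DConn E C v b) : DConn E (insert v C) a b := by
  rcases dconn_iff.mp h1 with ⟨p, hp, hph, hpl⟩
  rcases dconn_iff.mp h2 with ⟨q, hq, hqh, hql⟩
  obtain ⟨l, x, v', rfl⟩ := exists_append_pair hp.two_le
  have hv' : v = v' := by
    have : (l ++ [x, v']).getLast? = some v' := by simp
    rw [this] at hpl; exact (Option.some.inj hpl).symm
  subst hv'
  obtain ⟨v'', z, t, rfl⟩ := exists_cons_cons hq.two_le
  have hv'' : v = v'' := by symm; simpa using hqh
  subst hv''
  have hp' := AP_insert_sink hsink hvC _ hp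
  have hq' := AP_insert_sink hsink hvC _ hq
  have hxv : Adj E x v := (AP_suffix l hp (by simp)).resolve_right (hsink x)
  have hzv : Adj E z v := hq.head_adj2.resolve_left (hsink z)
  have htr : ActiveTriple E (insert v C) x v z :=
    Or.inl ⟨⟨hxv, hzv⟩, v, Finset.mem_insert_self _ _, Relation.ReflTransGen.refl⟩
  refine dconn_iff.mpr ⟨l ++ x :: v :: z :: t, AP_glue l hp' hq' htr, ?_, ?_⟩
  · rw [head?_append_cons l x (v :: z :: t) [v]]; exact hph
  · rw [List.getLast?_append]
    simp only [List.getLast?_cons_cons]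
    rw [List.getLast?_cons_cons] at hql
    rw [hql]; rfl


lemma chain_of_rtg {y d : V} (h : Relation.ReflTransGen (Adj E) y d) :
    ∃ l : List V, l.head? = some y ∧ l.getLast? = some d ∧ l.Chain' (Adj E) := by
  induction h using Relation.ReflTransGen.head_induction_on with
  | refl => exact ⟨[d], rfl, rfl, List.isChain_singleton _⟩
  | head hab _ ih =>
    obtain ⟨l, hh, hl, hc⟩ := ih
    obtain ⟨c, t, rfl⟩ : ∃ c t, l = c :: t := by
      cases l with
      | nil => simp at hh
      | cons c t => exact ⟨c, t, rfl⟩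
    have hc' : c = _ := Option.some.inj hh
    refine ⟨_ :: c :: t, rfl, by rw [List.getLast?_cons_cons]; exact hl, ?_⟩
    rw [List.Chain', List.isChain_cons_cons]
    exact ⟨hc' ▸ hab, hc⟩

lemma exists_first_mem {S : Finset V} :
    ∀ (l : List V) (d : V), l.getLast? = some d → d ∈ S →
      ∃ l₁ w l₂, l = l₁ ++ w :: l₂ ∧ w ∈ S ∧ ∀ u ∈ l₁, u ∉ S := by
  intro l
  induction l with
  | nil => simp
  | cons a t ih =>
    intro d hlast hd
    by_cases ha : a ∈ S
    · exact ⟨[], a, t, rfl, ha, by simp⟩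
    · cases t with
      | nil =>
        have : a = d := by simpa using hlast
        exact absurd (this ▸ hd) ha
      | cons b t' =>
        rw [List.getLast?_cons_cons] at hlast
        obtain ⟨l₁, w, l₂, he, hw, hnot⟩ := ih d hlast hd
        refine ⟨a :: l₁, w, l₂, by rw [he]; rfl, hw, ?_⟩
        intro u hu
        rcases List.mem_cons.mp hu with rfl | hu'
        · exact ha
        · exact hnot u hu'

lemma chain'_rtg : ∀ (l : List V) (x : V), l.Chain' (Adj E) → l.head? = some x →
    ∀ y ∈ l, Relation.ReflTransGen (Adj E) x y := by
  intro l
  induction l with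
  | nil => simp
  | cons a t ih =>
    intro x hc hh y hy
    have hx : x = a := (Option.some.inj hh).symm
    subst hx
    rcases List.mem_cons.mp hy with rfl | hy'
    · exact Relation.ReflTransGen.refl
    · cases t with
      | nil => simp at hy'
      | cons c t' =>
        rw [List.Chain', List.isChain_cons_cons] at hc
        exact Relation.ReflTransGen.head hc.1 (ih c hc.2 rfl y hy')

lemma AP_revdir (hdag : IsDAG E) :
    ∀ (seg : List V) (j z : V) (r : List V),
      List.Chain' (Adj E) (j :: seg) → (∀ x ∈ (j :: seg).dropLast, x ∉ C) →
      AP E C (j :: z :: r) → AP E C ((j :: seg).reverse ++ z :: r) := by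
  intro seg
  induction seg with
  | nil => intro j z r _ _ hap; simpa using hap
  | cons c seg' ih =>
    intro j z r hch hdrop hap
    rw [List.Chain', List.isChain_cons_cons] at hch
    have hjC : j ∉ C := hdrop j (by rw [List.dropLast_cons₂]; exact List.mem_cons_self)
    have hstep : AP E C (c :: j :: z :: r) :=
      ⟨Or.inr hch.1, Or.inr ⟨fun hcol => not_adj_rev hdag hch.1 hcol.1, hjC⟩, hap⟩
    have hdrop' : ∀ x ∈ (c :: seg').dropLast, x ∉ C := by
      intro x hx
      exact hdrop x (by rw [List.dropLast_cons₂]; exact List.mem_cons_of_mem _ hx)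
    have hres := ih c j (z :: r) hch.2 hdrop' hstep
    have he : (c :: seg').reverse ++ j :: z :: r = (j :: c :: seg').reverse ++ z :: r := by
      simp [List.reverse_cons, List.append_assoc]
    exact he ▸ hres

/-- A "bad" position: a collider on `p` at position `i+1` with no descendant in `C`. -/
def BadP (E : EdgeSet V) (C : Finset V) (p : List V) (i : ℕ) : Prop :=
  ∃ x y z, p[i]? = some x ∧ p[i+1]? = some y ∧ p[i+2]? = some z ∧
    IsCollider E x y z ∧ ∀ d ∈ C, ¬ Relation.ReflTransGen (Adj E) y d

lemma dconn_splice (hdag : IsDAG E) {W : Finset V} {a b : V}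
    (h : DConn E (C ∪ W) a b) : DConn E C a b ∨ ∃ w ∈ W, DConn E C w b := by
  classical
  rcases dconn_iff.mp h with ⟨p, hp, hh, hl⟩
  rcases AP_iff_APidx.mp hp with ⟨hlen, hadj, htri⟩
  by_cases hbad : ∃ i, BadP E C p i
  · -- take the greatest bad index
    obtain ⟨i₁, hi₁⟩ := hbad
    have badlt : ∀ {i : ℕ}, BadP E C p i → i + 2 < p.length := by
      rintro i ⟨x, y, z, e0, e1, e2, _⟩
      obtain ⟨h', _⟩ := List.getElem?_eq_some_iff.mp e2
      omega
    have hi₁le : i₁ ≤ p.length := by have := badlt hi₁; omega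
    have hspec : BadP E C p (Nat.findGreatest (BadP E C p) p.length) :=
      Nat.findGreatest_spec hi₁le hi₁
    set i₀ := Nat.findGreatest (BadP E C p) p.length with hi₀def
    obtain ⟨x₀, y₀, z₀, e0, e1, e2, hcol, hnoC⟩ := hspec
    have hIlt : i₀ + 2 < p.length := badlt ⟨x₀, y₀, z₀, e0, e1, e2, hcol, hnoC⟩
    have hy₀ : p[i₀+1]'(by omega) = y₀ := by
      obtain ⟨hh', he⟩ := List.getElem?_eq_some_iff.mp e1; exact he
    have hx₀ : p[i₀]'(by omega) = x₀ := by
      obtain ⟨hh', he⟩ := List.getElem?_eq_some_iff.mp e0; exact he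
    have hz₀ : p[i₀+2]'(by omega) = z₀ := by
      obtain ⟨hh', he⟩ := List.getElem?_eq_some_iff.mp e2; exact he
    -- the tail of p from position i₀+1 is an active path given C
    have htget : ∀ (j : ℕ) (hj : j < (p.drop (i₀+1)).length),
        (p.drop (i₀+1))[j]'hj = p[i₀+1+j]'(by simp at hj; omega) := by
      intro j hj; simp [List.getElem_drop]
    have htlen : (p.drop (i₀+1)).length = p.length - (i₀+1) := by simp
    have hgood : ∀ (i : ℕ), i₀ < i → (h : i + 2 < p.length) →
        ActiveTriple E C (p[i]'(by omega)) (p[i+1]'(by omega)) (p[i+2]'h) := by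
      intro i hii h'
      have hnb : ¬ BadP E C p i := Nat.findGreatest_is_greatest hii (by omega)
      rcases htri i h' with ⟨col, d, hd, hdd⟩ | ⟨nc, hy⟩
      · refine Or.inl ⟨col, ?_⟩
        by_contra hno
        push_neg at hno
        exact hnb ⟨_, _, _, List.getElem?_eq_getElem (by omega),
          List.getElem?_eq_getElem (by omega), List.getElem?_eq_getElem h', col, hno⟩
      · exact Or.inr ⟨nc, fun hyC => hy (Finset.mem_union_left _ hyC)⟩
    have htAP : APidx E C (p.drop (i₀+1)) := by
      refine ⟨by omega, ?_, ?_⟩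
      · intro j hj
        rw [htget j (by omega), htget (j+1) hj]
        rw [getElem_idx_congr (show i₀+1+(j+1) = (i₀+1+j)+1 by omega)]
        exact hadj (i₀+1+j) (by simp at hj; omega)
      · intro j hj
        rw [htget j (by omega), htget (j+1) (by omega), htget (j+2) hj]
        rw [getElem_idx_congr (show i₀+1+(j+1) = (i₀+1+j)+1 by omega),
            getElem_idx_congr (show i₀+1+(j+2) = (i₀+1+j)+2 by omega)]
        exact hgood (i₀+1+j) (by omega) (by simp at hj; omega)
    have hthead : (p.drop (i₀+1)).head? = some y₀ := by
      rw [List.head?_drop]; exact e1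
    have htlast : (p.drop (i₀+1)).getLast? = some b := by
      rw [List.getLast?_eq_getElem?] at hl ⊢
      rw [List.getElem?_eq_getElem (by rw [htlen]; omega),
          htget ((p.drop (i₀+1)).length - 1) (by omega),
          getElem_idx_congr (show i₀+1+((p.drop (i₀+1)).length-1) = p.length - 1 by
            rw [htlen]; omega)]
      rw [List.getElem?_eq_getElem (by omega)] at hl
      exact hl
    by_cases hyW : y₀ ∈ W
    · exact Or.inr ⟨y₀, hyW, dconn_iff.mpr ⟨_, AP_iff_APidx.mpr htAP, hthead, htlast⟩⟩
    · -- y₀ is not in C ∪ W; reroute through a directed path to W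
      have hyC : y₀ ∉ C := fun hyC => hnoC y₀ hyC Relation.ReflTransGen.refl
      have hyS : y₀ ∉ C ∪ W := by
        rw [Finset.mem_union]; rintro (h | h); exacts [hyC h, hyW h]
      obtain ⟨d, hd, hdd⟩ : ∃ d ∈ C ∪ W, Relation.ReflTransGen (Adj E) y₀ d := by
        rcases htri i₀ hIlt with ⟨col, d, hd, hdd⟩ | ⟨nc, _⟩
        · exact ⟨d, hd, by rwa [hy₀] at hdd⟩
        · rw [hx₀, hy₀, hz₀] at nc
          exact absurd hcol nc
      obtain ⟨l, hlh, hll, hlc⟩ := chain_of_rtg hdd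
      obtain ⟨l₁, w, l₂, hle, hwS, hl₁⟩ := exists_first_mem l d hll hd
      obtain ⟨l₁', rfl⟩ : ∃ l₁', l₁ = y₀ :: l₁' := by
        cases l₁ with
        | nil =>
          exfalso
          have : w = y₀ := by rw [hle] at hlh; simpa using hlh
          exact hyS (this ▸ hwS)
        | cons u l₁' =>
          have : u = y₀ := by rw [hle] at hlh; simpa using hlh
          exact ⟨l₁', by rw [this]⟩
      have hwW : w ∈ W := by
        rcases Finset.mem_union.mp hwS with hwC | hwW
        · exact absurd (chain'_rtg l y₀ hlc hlh w (by rw [hle]; simp)) (fun hr => hnoC w hwC hr)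
        · exact hwW
      -- split the tail path
      obtain ⟨y', z, r, htshape⟩ := exists_cons_cons (p := p.drop (i₀+1))
        (by rw [htlen]; omega)
      have hy' : y' = y₀ := by rw [htshape] at hthead; simpa using hthead
      subst hy'
      have htAP' : AP E C (y' :: z :: r) := by
        rw [← htshape]; exact AP_iff_APidx.mpr htAP
      have hchain : List.Chain' (Adj E) (y' :: (l₁' ++ [w])) := by
        refine hlc.prefix ?_
        rw [hle]
        exact ⟨l₂, by simp⟩
      have hdropC : ∀ x ∈ (y' :: (l₁' ++ [w])).dropLast, x ∉ C := by
        intro x hx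
        have hd' : (y' :: (l₁' ++ [w])).dropLast = y' :: l₁' := by
          rw [show y' :: (l₁' ++ [w]) = (y' :: l₁') ++ [w] by simp, List.dropLast_concat]
        rw [hd'] at hx
        intro hxC
        exact hl₁ x hx (Finset.mem_union_left _ hxC)
      have hres := AP_revdir hdag (l₁' ++ [w]) y' z r hchain hdropC htAP'
      refine Or.inr ⟨w, hwW, dconn_iff.mpr ⟨(y' :: (l₁' ++ [w])).reverse ++ z :: r, hres, ?_, ?_⟩⟩
      · rw [List.head?_append, List.head?_reverse]
        rw [show y' :: (l₁' ++ [w]) = (y' :: l₁') ++ [w] by simp, List.getLast?_concat]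
        rfl
      · rw [List.getLast?_append]
        have hzr : (z :: r).getLast? = some b := by
          rw [htshape, List.getLast?_cons_cons] at htlast; exact htlast
        rw [hzr]; rfl
  · -- no bad collider: p is active given C
    left
    push_neg at hbad
    refine dconn_iff.mpr ⟨p, AP_iff_APidx.mpr ⟨hlen, hadj, ?_⟩, hh, hl⟩
    intro i hi
    rcases htri i hi with ⟨col, d, hd, hdd⟩ | ⟨nc, hy⟩
    · refine Or.inl ⟨col, ?_⟩
      by_contra hno
      push_neg at hno
      exact hbad i ⟨_, _, _, List.getElem?_eq_getElem (by omega),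
        List.getElem?_eq_getElem (by omega), List.getElem?_eq_getElem hi, col, hno⟩
    · exact Or.inr ⟨nc, fun hyC => hy (Finset.mem_union_left _ hyC)⟩


lemma dconn_insert_sink {v a b : V} (hsink : ∀ w, ¬ Adj E v w) (hv : v ∉ C)
    (h : DConn E C a b) : DConn E (insert v C) a b := by
  rcases dconn_iff.mp h with ⟨p, hp, hh, hl⟩
  exact dconn_iff.mpr ⟨p, AP_insert_sink hsink hv p hp, hh, hl⟩

end PathMachinery


section PreLemmas

lemma mem_take_iff_indexOf {l : List V} {x : V} {n : ℕ} :
    x ∈ l.take n ↔ x ∈ l ∧ l.idxOf x < n := by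
  induction l generalizing n with
  | nil => simp
  | cons a t ih =>
    cases n with
    | zero => simp
    | succ m =>
      rw [List.take_succ_cons]
      by_cases hxa : x = a
      · subst hxa
        simp [List.idxOf_cons_self]
      · simp only [List.mem_cons, hxa, false_or, List.idxOf_cons_ne _ (Ne.symm hxa), ih]
        constructor
        · rintro ⟨h1, h2⟩; exact ⟨h1, by omega⟩
        · rintro ⟨h1, h2⟩; exact ⟨h1, by omega⟩

lemma takeWhile_ne_eq_take {l : List V} {k : V} :
    l.takeWhile (fun x => x != k) = l.take (l.idxOf k) := by
  induction l with
  | nil => simp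
  | cons a t ih =>
    by_cases hak : a = k
    · subst hak
      simp [List.takeWhile_cons, List.idxOf_cons_self]
    · rw [List.takeWhile_cons]
      simp only [bne_iff_ne, ne_eq, hak, not_false_eq_true, ite_true]
      rw [List.idxOf_cons_ne _ hak, Nat.succ_eq_add_one, List.take_succ_cons, ih]

lemma mem_pre_iff {π : List V} {k x : V} :
    x ∈ pre π k ↔ x ∈ π ∧ π.idxOf x < π.idxOf k := by
  unfold pre
  rw [takeWhile_ne_eq_take, List.mem_toFinset]
  exact mem_take_iff_indexOf

lemma not_mem_pre_self {π : List V} {k : V} : k ∉ pre π k := by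
  simp [mem_pre_iff]

lemma pre_iff_lt {π : List V} (hperm : IsPermList π) {k x : V} :
    x ∈ pre π k ↔ π.idxOf x < π.idxOf k := by
  rw [mem_pre_iff]
  exact ⟨fun h => h.2, fun h => ⟨hperm.2 x, h⟩⟩

lemma isDAG_of_mono {E : EdgeSet V} (f : V → ℕ) (h : ∀ a b, Adj E a b → f a < f b) :
    IsDAG E := by
  have key : ∀ a b, Relation.TransGen (Adj E) a b → f a < f b := by
    intro a b hab
    induction hab with
    | single h' => exact h _ _ h'
    | tail _ h' ih => exact lt_trans ih (h _ _ h')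
  exact fun v hv => lt_irrefl _ (key v v hv)

lemma isDAG_subset {E E' : EdgeSet V} (h : E ⊆ E') (hd : IsDAG E') : IsDAG E :=
  fun v hv => hd v (Relation.TransGen.mono (r := Adj E) (p := Adj E') (fun a b hab => h hab) _ _ hv)

lemma mem_RU {I : IndepModel V} {π : List V} {j k : V} :
    (j, k) ∈ RUedges I π ↔ j ∈ pre π k ∧ ¬ I {j} {k} ((pre π k).erase j) := by
  simp [RUedges]

lemma RU_adj_lt {I : IndepModel V} {π : List V} (hperm : IsPermList π) {a b : V}
    (h : Adj (RUedges I π) a b) : π.idxOf a < π.idxOf b :=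
  (pre_iff_lt hperm).mp (mem_RU.mp h).1

lemma RU_dag {I : IndepModel V} {π : List V} (hperm : IsPermList π) : IsDAG (RUedges I π) :=
  isDAG_of_mono (fun v => π.idxOf v) (fun _ _ h => RU_adj_lt hperm h)

/-- The level-`m` approximation of the RU graph. -/
noncomputable def Elev (I : IndepModel V) (π : List V) (m : ℕ) : EdgeSet V :=
  (RUedges I π).filter (fun e => π.idxOf e.2 < m)

def Vlev (π : List V) (m : ℕ) : Finset V := (π.take m).toFinset

lemma Elev_subset {I : IndepModel V} {π : List V} {m : ℕ} : Elev I π m ⊆ RUedges I π :=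
  Finset.filter_subset _ _

lemma Elev_mono {I : IndepModel V} {π : List V} {m m' : ℕ} (h : m ≤ m') :
    Elev I π m ⊆ Elev I π m' := by
  intro e he
  rw [Elev, Finset.mem_filter] at he ⊢
  exact ⟨he.1, lt_of_lt_of_le he.2 h⟩

lemma Elev_dag {I : IndepModel V} {π : List V} (hperm : IsPermList π) {m : ℕ} :
    IsDAG (Elev I π m) := isDAG_subset Elev_subset (RU_dag hperm)

lemma mem_Elev {I : IndepModel V} {π : List V} {m : ℕ} {j k : V} :
    (j, k) ∈ Elev I π m ↔ (j, k) ∈ RUedges I π ∧ π.idxOf k < m := by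
  rw [Elev, Finset.mem_filter]

lemma mem_Vlev {π : List V} {m : ℕ} {x : V} :
    x ∈ Vlev π m ↔ x ∈ π ∧ π.idxOf x < m := by
  rw [Vlev, List.mem_toFinset]
  exact mem_take_iff_indexOf

lemma Elev_top {I : IndepModel V} {π : List V} (hperm : IsPermList π) :
    Elev I π π.length = RUedges I π := by
  ext e
  rw [Elev, Finset.mem_filter]
  exact ⟨fun h => h.1, fun h => ⟨h, List.idxOf_lt_length_iff.mpr (hperm.2 e.2)⟩⟩

end PreLemmas


section GraphLemmas

variable {I : IndepModel V} {π : List V} {m : ℕ}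

lemma indexOf_get {π : List V} (hnd : π.Nodup) {m : ℕ} (hm : m < π.length) :
    π.idxOf (π[m]'hm) = m := by
  have h1 : π.idxOf (π[m]'hm) < π.length :=
    List.idxOf_lt_length_iff.mpr (List.getElem_mem hm)
  have h2 : π[π.idxOf (π[m]'hm)]'h1 = π[m]'hm := List.getElem_idxOf h1
  exact hnd.getElem_inj_iff.mp h2

lemma Vlev_of_ge (hperm : IsPermList π) (h : π.length ≤ m) : Vlev π m = Finset.univ := by
  ext x
  simp only [mem_Vlev, Finset.mem_univ, iff_true]
  exact ⟨hperm.2 x, lt_of_lt_of_le (List.idxOf_lt_length_iff.mpr (hperm.2 x)) h⟩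

lemma Elev_of_ge (hperm : IsPermList π) (h : π.length ≤ m) : Elev I π m = RUedges I π := by
  ext e
  rw [Elev, Finset.mem_filter]
  exact ⟨fun h' => h'.1,
    fun h' => ⟨h', lt_of_lt_of_le (List.idxOf_lt_length_iff.mpr (hperm.2 e.2)) h⟩⟩

lemma pre_get (hperm : IsPermList π) (hm : m < π.length) :
    pre π (π[m]'hm) = Vlev π m := by
  ext x
  rw [pre_iff_lt hperm, mem_Vlev, indexOf_get hperm.1 hm]
  exact ⟨fun h => ⟨hperm.2 x, h⟩, fun h => h.2⟩

lemma v_not_mem_Vlev (hperm : IsPermList π) (hm : m < π.length) :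
    π[m]'hm ∉ Vlev π m := by
  rw [mem_Vlev, indexOf_get hperm.1 hm]
  omega

lemma Vlev_succ (hperm : IsPermList π) (hm : m < π.length) :
    Vlev π (m+1) = insert (π[m]'hm) (Vlev π m) := by
  ext x
  rw [mem_Vlev, Finset.mem_insert, mem_Vlev]
  constructor
  · rintro ⟨hx, hlt⟩
    by_cases he : π.idxOf x = m
    · left
      have hxl := List.idxOf_lt_length_iff.mpr hx
      have h2 := List.getElem_idxOf hxl
      rw [← h2]
      exact getElem_idx_congr he hxl
    · exact Or.inr ⟨hx, by omega⟩
  · rintro (rfl | ⟨hx, hlt⟩)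
    · exact ⟨hperm.2 _, by rw [indexOf_get hperm.1 hm]; omega⟩
    · exact ⟨hx, by omega⟩

lemma sink_Elev (hperm : IsPermList π) (hm : m < π.length) :
    ∀ w, ¬ Adj (Elev I π (m+1)) (π[m]'hm) w := by
  intro w hw
  rw [Adj, mem_Elev] at hw
  have h2 := RU_adj_lt hperm (hw.1 : Adj (RUedges I π) _ _)
  rw [indexOf_get hperm.1 hm] at h2
  omega

lemma into_v_Elev (hperm : IsPermList π) (hm : m < π.length) {l : V} :
    Adj (Elev I π (m+1)) l (π[m]'hm) ↔ (l, π[m]'hm) ∈ RUedges I π := by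
  rw [Adj, mem_Elev, indexOf_get hperm.1 hm]
  exact ⟨fun h => h.1, fun h => ⟨h, by omega⟩⟩

/-- The RU parents of a vertex. -/
noncomputable def RUpar (I : IndepModel V) (π : List V) (v : V) : Finset V :=
  (pre π v).filter (fun j => ¬ I {j} {v} ((pre π v).erase j))

lemma RUpar_subset {v : V} : RUpar I π v ⊆ pre π v := Finset.filter_subset _ _

lemma mem_RU_iff_par {j v : V} : (j, v) ∈ RUedges I π ↔ j ∈ RUpar I π v := by
  rw [mem_RU, RUpar, Finset.mem_filter]

lemma empty_indep {H : EdgeSet V} (hmk : Markovian H I) :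
    ∀ A C₀ : Finset V, Disjoint A C₀ → I A ∅ C₀ := fun A C₀ hd =>
  hmk A ∅ C₀ ⟨Finset.disjoint_empty_right _, hd, Finset.disjoint_empty_left _⟩
    (fun _ _ b hb => absurd hb (Finset.notMem_empty b))

/-- The ordered Markov property of the RU construction, via the intersection axiom. -/
lemma RU_ordered_markov (hG : Graphoid I)
    (hem : ∀ A C₀ : Finset V, Disjoint A C₀ → I A ∅ C₀) (v : V) :
    I {v} (pre π v \ RUpar I π v) (RUpar I π v) := by
  have key : ∀ S : Finset V, S ⊆ pre π v \ RUpar I π v → I {v} S (pre π v \ S) := by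
    intro S
    induction S using Finset.induction_on with
    | empty =>
      intro _
      rw [Finset.sdiff_empty]
      exact hem _ _ (Finset.disjoint_singleton_left.mpr not_mem_pre_self)
    | @insert j S hjS ih =>
      intro hsub
      have hjPL : j ∈ pre π v \ RUpar I π v := hsub (Finset.mem_insert_self _ _)
      have hjP : j ∈ pre π v := (Finset.mem_sdiff.mp hjPL).1
      have hjL : j ∉ RUpar I π v := (Finset.mem_sdiff.mp hjPL).2
      have hSsub : S ⊆ pre π v \ RUpar I π v :=
        Finset.Subset.trans (Finset.subset_insert _ _) hsub
      have hS : I {v} S (pre π v \ S) := ih hSsub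
      have hSP : S ⊆ pre π v := Finset.Subset.trans hSsub Finset.sdiff_subset
      have hjdep : I {v} {j} (pre π v \ {j}) := by
        have h1 : I {j} {v} ((pre π v).erase j) := by
          by_contra hno
          exact hjL (Finset.mem_filter.mpr ⟨hjP, hno⟩)
        have h2 := hG.symm _ _ _ h1
        rwa [Finset.erase_eq] at h2
      have e1 : (pre π v \ insert j S) ∪ {j} = pre π v \ S := by
        ext x
        by_cases hx : x = j
        · subst hx; simp [hjP, hjS]
        · simp [hx]
      have e2 : (pre π v \ insert j S) ∪ S = pre π v \ {j} := by
        ext x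
        by_cases hx : x ∈ S
        · simp only [Finset.mem_union, hx, or_true, true_iff, Finset.mem_sdiff,
            Finset.mem_singleton]
          exact ⟨hSP hx, fun he => hjS (he ▸ hx)⟩
        · simp only [Finset.mem_union, hx, or_false, Finset.mem_sdiff,
            Finset.mem_insert, Finset.mem_singleton]
      have h1 : I {v} S ((pre π v \ insert j S) ∪ {j}) := by rw [e1]; exact hS
      have h2 : I {v} {j} ((pre π v \ insert j S) ∪ S) := by rw [e2]; exact hjdep
      have h3 := hG.intersection {v} S {j} (pre π v \ insert j S) h1 h2
      rwa [show S ∪ {j} = insert j S by rw [Finset.union_comm, ← Finset.insert_eq]] at h3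
  have hfin := key (pre π v \ RUpar I π v) (Finset.Subset.refl _)
  rwa [Finset.sdiff_sdiff_eq_self RUpar_subset] at hfin

end GraphLemmas


section PartOne

/-- Key d-separation for part 1: a non-edge `(j,k)` with `j` before `k` in a causal
order is d-separated by the other predecessors of `k`. -/
lemma part1_dsep {H : EdgeSet V} (hdag : IsDAG H) {π : List V} (hco : CausalOrder H π)
    {j k : V} (hj : j ∈ pre π k) (hjk : (j, k) ∉ H) :
    DSep H {j} {k} ((pre π k).erase j) := by
  obtain ⟨hperm, hord⟩ := hco
  have hCpre : (pre π k).erase j ⊆ pre π k := Finset.erase_subset _ _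
  have hidx : ∀ x ∈ pre π k, π.idxOf x < π.idxOf k :=
    fun x hx => (pre_iff_lt hperm).mp hx
  have hdesc : ∀ d, Relation.TransGen (Adj H) k d → d ∉ pre π k := by
    intro d hd hmem
    have h1 := hord k d hd
    have h2 := hidx d hmem
    omega
  have core : ¬ DConn H ((pre π k).erase j) j k := by
   intro hconn
   have hconn' := hconn.symm
   rcases dconn_iff.mp hconn' with ⟨p, hp, hh, hl⟩
   obtain ⟨k', y, t, rfl⟩ := exists_cons_cons hp.two_le
   have hk' : k = k' := by symm; simpa using hh
   subst hk'
   have main : ∀ (t : List V) (x y : V), Adj H x y → Relation.TransGen (Adj H) k y →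
       AP H ((pre π k).erase j) (x :: y :: t) → (x :: y :: t).getLast? = some j → False := by
     intro t
     induction t with
     | nil =>
       intro x y _ htr _ hlast
       have hyb : j = y := by symm; simpa using hlast
       subst hyb
       have h1 := hord k j htr
       have h2 := hidx j hj
       omega
     | cons z t ih =>
       intro x y hxy htr hap hlast
       rcases hap.2.1 with ⟨_, d, hd, hdd⟩ | ⟨nc, _⟩
       · exact hdesc d (htr.trans_left hdd) (hCpre hd)
       · have hzy : ¬ Adj H z y := fun hzy => nc ⟨hxy, hzy⟩
         have hyz : Adj H y z := (hap.2.2.head_adj2).resolve_right hzy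
         exact ih y z hyz (htr.tail hyz) hap.2.2
           (by rwa [List.getLast?_cons_cons] at hlast)
   rcases t with _ | ⟨z, t⟩
   · have hyb : j = y := by symm; simpa using hl
     subst hyb
     have hadj : adj2 H k j := hp
     rcases hadj with hkj | hjk'
     · exact hdesc j (Relation.TransGen.single hkj) hj
     · exact hjk hjk'
   · rcases hp.1 with hky | hyk
     · exact main (z :: t) k y hky (Relation.TransGen.single hky) hp (by simpa using hl)
     · have hyj : y ≠ j := fun he => hjk (he ▸ hyk)
       have hypre : y ∈ pre π k :=
         (pre_iff_lt hperm).mpr (hord y k (Relation.TransGen.single hyk))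
       have hyC : y ∈ (pre π k).erase j := Finset.mem_erase.mpr ⟨hyj, hypre⟩
       rcases hp.2.1 with ⟨⟨hc1, _⟩, _⟩ | ⟨_, hyC'⟩
       · exact not_adj_rev hdag hyk hc1
       · exact hyC' hyC

  intro a ha b hb
  rw [Finset.mem_singleton] at ha hb
  rw [ha, hb]
  exact core

lemma RU_subset_H {I : IndepModel V} {H : EdgeSet V} (hdag : IsDAG H)
    (hmk : Markovian H I) {π : List V} (hco : CausalOrder H π) :
    RUedges I π ⊆ H := by
  intro e he
  obtain ⟨j, k⟩ := e
  rw [mem_RU] at he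
  by_contra hnot
  have hds := part1_dsep hdag hco he.1 hnot
  have hjk : j ≠ k := fun h => not_mem_pre_self (h ▸ he.1)
  have hdisj : PairwiseDisjoint3 {j} {k} ((pre π k).erase j) := by
    refine ⟨by simp only [Finset.disjoint_singleton_left, Finset.mem_singleton]; exact hjk, ?_, ?_⟩
    · simp [Finset.disjoint_singleton_left]
    · simp [Finset.disjoint_singleton_left, Finset.mem_erase, not_mem_pre_self]
  exact he.2 (hmk _ _ _ hdisj hds)

end PartOne


section MainInduction

variable {I : IndepModel V} {π : List V} {m : ℕ}

/-- Statement of the grand induction at level `m`. -/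
def SmStmt (I : IndepModel V) (π : List V) (m : ℕ) : Prop :=
  ∀ A B C₀ : Finset V, A ⊆ Vlev π m → B ⊆ Vlev π m → C₀ ⊆ Vlev π m →
    PairwiseDisjoint3 A B C₀ → DSep (Elev I π m) A B C₀ → I A B C₀

lemma T_step (hG : Graphoid I) (hem : ∀ A C₀ : Finset V, Disjoint A C₀ → I A ∅ C₀)
    (hperm : IsPermList π) (hm : m < π.length) (ih : SmStmt I π m)
    (B S : Finset V) (hB : B ⊆ Vlev π m) (hS : S ⊆ Vlev π m) (hBS : Disjoint B S)
    (hd : DSep (Elev I π (m+1)) {π[m]'hm} B S) : I {π[m]'hm} B S := by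
  set v := π[m]'hm with hv
  have hPV : pre π v = Vlev π m := pre_get hperm hm
  set L := RUpar I π v with hL
  have hLP : L ⊆ pre π v := RUpar_subset
  have hOM : I {v} (pre π v \ L) L := RU_ordered_markov hG hem v
  have hdagE' : IsDAG (Elev I π (m+1)) := Elev_dag hperm
  have hLB : Disjoint L B := by
    rw [Finset.disjoint_left]
    intro l hl hlB
    exact hd v (Finset.mem_singleton_self v) l hlB
      (dconn_pair (Or.inr ((into_v_Elev hperm hm).mpr (mem_RU_iff_par.mpr hl))))
  -- step (b): I {v} B (L ∪ S)
  have hSsub : S \ L ⊆ pre π v \ L := by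
    intro x hx
    rw [Finset.mem_sdiff] at hx ⊢
    exact ⟨hPV ▸ hS hx.1, hx.2⟩
  have hBsub : B ⊆ (pre π v \ L) \ (S \ L) := by
    intro x hx
    rw [Finset.mem_sdiff, Finset.mem_sdiff]
    refine ⟨⟨hPV ▸ hB hx, Finset.disjoint_right.mp hLB hx⟩, ?_⟩
    rw [Finset.mem_sdiff]
    rintro ⟨hxS, _⟩
    exact Finset.disjoint_left.mp hBS hx hxS
  have idA : ((pre π v \ L) \ (S \ L)) ∪ (S \ L) = pre π v \ L :=
    Finset.sdiff_union_of_subset hSsub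
  have hb1 : I {v} ((pre π v \ L) \ (S \ L)) (L ∪ (S \ L)) :=
    hG.weakUnion _ _ _ _ (by rw [idA]; exact hOM)
  have idB : L ∪ (S \ L) = L ∪ S := Finset.union_sdiff_self_eq_union
  have hb2 : I {v} ((pre π v \ L) \ (S \ L)) (L ∪ S) := idB ▸ hb1
  have idC : B ∪ (((pre π v \ L) \ (S \ L)) \ B) = (pre π v \ L) \ (S \ L) :=
    Finset.union_sdiff_of_subset hBsub
  have hb3 : I {v} B (L ∪ S) :=
    (hG.decomposition {v} B _ (L ∪ S) (by rw [idC]; exact hb2)).1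
  -- step (a): I (L \ S) B S via the inner induction hypothesis
  have hLS_dsep : DSep (Elev I π m) (L \ S) B S := by
    intro l hl b hb hconn
    have hconn' : DConn (Elev I π (m+1)) S l b :=
      dconn_mono (Elev_mono (Nat.le_succ m)) hdagE' hconn
    have hlnotS : l ∉ S := (Finset.mem_sdiff.mp hl).2
    have hadj : Adj (Elev I π (m+1)) l v :=
      (into_v_Elev hperm hm).mpr (mem_RU_iff_par.mpr (Finset.mem_sdiff.mp hl).1)
    exact hd v (Finset.mem_singleton_self v) b hb
      (DConn.cons hdagE' hadj hlnotS hconn')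
  have ha : I (L \ S) B S := by
    refine ih (L \ S) B S ?_ hB hS ⟨?_, Finset.sdiff_disjoint, hBS⟩ hLS_dsep
    · exact fun x hx => hPV ▸ hLP (Finset.mem_sdiff.mp hx).1
    · exact (hLB.mono_left Finset.sdiff_subset).symm.symm
  -- combine with contraction
  have hc1 : I B (L \ S) S := hG.symm _ _ _ ha
  have idD : S ∪ (L \ S) = L ∪ S := by
    rw [Finset.union_sdiff_self_eq_union, Finset.union_comm]
  have hc2 : I B {v} (S ∪ (L \ S)) := by rw [idD]; exact hG.symm _ _ _ hb3
  have hc3 : I B ((L \ S) ∪ {v}) S := hG.contraction B (L \ S) {v} S hc1 hc2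
  have hc4 : I B {v} S :=
    (hG.decomposition B {v} (L \ S) S
      (by rw [Finset.union_comm]; exact hc3)).1
  exact hG.symm _ _ _ hc4

lemma subset_Vlev_of_not_mem (hperm : IsPermList π) (hm : m < π.length)
    {X : Finset V} (hX : X ⊆ Vlev π (m+1)) (hv : π[m]'hm ∉ X) : X ⊆ Vlev π m := by
  intro x hx
  have h1 := hX hx
  rw [Vlev_succ hperm hm] at h1
  rcases Finset.mem_insert.mp h1 with rfl | h
  · exact absurd hx hv
  · exact h

lemma case2 (hG : Graphoid I) (hem : ∀ A C₀ : Finset V, Disjoint A C₀ → I A ∅ C₀)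
    (hperm : IsPermList π) (hm : m < π.length) (ih : SmStmt I π m)
    (A B C₀ : Finset V) (hA : A ⊆ Vlev π (m+1)) (hB : B ⊆ Vlev π (m+1))
    (hC : C₀ ⊆ Vlev π (m+1)) (hdisj : PairwiseDisjoint3 A B C₀)
    (hds : DSep (Elev I π (m+1)) A B C₀) (hvA : π[m]'hm ∈ A) : I A B C₀ := by
  set v := π[m]'hm with hv
  have hdagE' : IsDAG (Elev I π (m+1)) := Elev_dag hperm
  set A' := A.erase v with hA'def
  have hvB : v ∉ B := Finset.disjoint_left.mp hdisj.1 hvA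
  have hvC : v ∉ C₀ := Finset.disjoint_left.mp hdisj.2.1 hvA
  have hA'sub : A' ⊆ Vlev π m :=
    subset_Vlev_of_not_mem hperm hm ((Finset.erase_subset _ _).trans hA)
      (Finset.notMem_erase _ _)
  have hBsub : B ⊆ Vlev π m := subset_Vlev_of_not_mem hperm hm hB hvB
  have hCsub : C₀ ⊆ Vlev π m := subset_Vlev_of_not_mem hperm hm hC hvC
  have h1 : I A' B C₀ := by
    refine ih A' B C₀ hA'sub hBsub hCsub
      ⟨hdisj.1.mono_left (Finset.erase_subset _ _),
       hdisj.2.1.mono_left (Finset.erase_subset _ _), hdisj.2.2⟩ ?_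
    intro a ha b hb hconn
    exact hds a (Finset.erase_subset _ _ ha) b hb
      (dconn_mono (Elev_mono (Nat.le_succ m)) hdagE' hconn)
  have h2 : DSep (Elev I π (m+1)) {v} B (C₀ ∪ A') := by
    intro a ha b hb hconn
    rw [Finset.mem_singleton] at ha
    subst ha
    rcases dconn_splice hdagE' hconn with h | ⟨w, hw, hcw⟩
    · exact hds v hvA b hb h
    · exact hds w (Finset.erase_subset _ _ hw) b hb hcw
  have h3 : I {v} B (C₀ ∪ A') := by
    refine T_step hG hem hperm hm ih B (C₀ ∪ A') hBsub
      (Finset.union_subset hCsub hA'sub) ?_ h2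
    exact Finset.disjoint_union_right.mpr
      ⟨hdisj.2.2, hdisj.1.symm.mono_right (Finset.erase_subset _ _)⟩
  have hc3 : I B (A' ∪ {v}) C₀ :=
    hG.contraction B A' {v} C₀ (hG.symm _ _ _ h1) (hG.symm _ _ _ h3)
  have idE : A' ∪ {v} = A := by
    rw [Finset.union_comm, ← Finset.insert_eq, hA'def, Finset.insert_erase hvA]
  exact hG.symm _ _ _ (idE ▸ hc3)

lemma case3core (hG : Graphoid I) (hem : ∀ A C₀ : Finset V, Disjoint A C₀ → I A ∅ C₀)
    (hperm : IsPermList π) (hm : m < π.length) (ih : SmStmt I π m)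
    (A B C₀ : Finset V) (hA : A ⊆ Vlev π (m+1)) (hB : B ⊆ Vlev π (m+1))
    (hC : C₀ ⊆ Vlev π (m+1)) (hdisj : PairwiseDisjoint3 A B C₀)
    (hds : DSep (Elev I π (m+1)) A B C₀) (hvC : π[m]'hm ∈ C₀)
    (hnB : ∀ b ∈ B, ¬ DConn (Elev I π (m+1)) (C₀.erase (π[m]'hm)) (π[m]'hm) b) :
    I A B C₀ := by
  set v := π[m]'hm with hv
  have hdagE' : IsDAG (Elev I π (m+1)) := Elev_dag hperm
  have hsink := sink_Elev hperm hm (I := I)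
  set C' := C₀.erase v with hC'def
  have hvC' : v ∉ C' := Finset.notMem_erase _ _
  have hins : insert v C' = C₀ := Finset.insert_erase hvC
  have hvA : v ∉ A := Finset.disjoint_right.mp hdisj.2.1 hvC
  have hvB : v ∉ B := Finset.disjoint_right.mp hdisj.2.2 hvC
  have hF1 : DSep (Elev I π (m+1)) A B C' := by
    intro a ha b hb hconn
    have := dconn_insert_sink hsink hvC' hconn
    rw [hins] at this
    exact hds a ha b hb this
  have hAsub : A ⊆ Vlev π m := subset_Vlev_of_not_mem hperm hm hA hvA
  have hBsub : B ⊆ Vlev π m := subset_Vlev_of_not_mem hperm hm hB hvB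
  have hC'sub : C' ⊆ Vlev π m :=
    subset_Vlev_of_not_mem hperm hm ((Finset.erase_subset _ _).trans hC)
      (Finset.notMem_erase _ _)
  have hIH : I A B C' := by
    refine ih A B C' hAsub hBsub hC'sub
      ⟨hdisj.1, hdisj.2.1.mono_right (Finset.erase_subset _ _),
       hdisj.2.2.mono_right (Finset.erase_subset _ _)⟩ ?_
    intro a ha b hb hconn
    exact hF1 a ha b hb (dconn_mono (Elev_mono (Nat.le_succ m)) hdagE' hconn)
  have h4 : DSep (Elev I π (m+1)) {v} B (C' ∪ A) := by
    intro a ha b hb hconn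
    rw [Finset.mem_singleton] at ha
    subst ha
    rcases dconn_splice hdagE' hconn with h | ⟨w, hw, hcw⟩
    · exact hnB b hb h
    · exact hF1 w hw b hb hcw
  have h5 : I {v} B (C' ∪ A) := by
    refine T_step hG hem hperm hm ih B (C' ∪ A) hBsub
      (Finset.union_subset hC'sub hAsub) ?_ h4
    exact Finset.disjoint_union_right.mpr
      ⟨hdisj.2.2.mono_right (Finset.erase_subset _ _), hdisj.1.symm⟩
  have hc3 : I B (A ∪ {v}) C' :=
    hG.contraction B A {v} C' (hG.symm _ _ _ hIH) (hG.symm _ _ _ h5)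
  have hc4 : I B A (C' ∪ {v}) := hG.weakUnion B A {v} C' hc3
  have idF : C' ∪ {v} = C₀ := by
    rw [Finset.union_comm, ← Finset.insert_eq, hC'def, Finset.insert_erase hvC]
  exact hG.symm _ _ _ (idF ▸ hc4)

lemma grand_induction (hG : Graphoid I)
    (hem : ∀ A C₀ : Finset V, Disjoint A C₀ → I A ∅ C₀)
    (hperm : IsPermList π) : ∀ m, SmStmt I π m := by
  intro m
  induction m with
  | zero =>
    intro A B C₀ hA hB hC hdisj _
    have hV0 : Vlev π 0 = (∅ : Finset V) := by simp [Vlev]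
    rw [hV0] at hA hB hC
    rw [Finset.subset_empty] at hA hB hC
    subst hA; subst hB; subst hC
    exact hem ∅ ∅ (Finset.disjoint_empty_right _)
  | succ m ih =>
    by_cases hm : m < π.length
    · intro A B C₀ hA hB hC hdisj hds
      by_cases hvA : π[m]'hm ∈ A
      · exact case2 hG hem hperm hm ih A B C₀ hA hB hC hdisj hds hvA
      · by_cases hvB : π[m]'hm ∈ B
        · refine hG.symm _ _ _ (case2 hG hem hperm hm ih B A C₀ hB hA hC
            ⟨hdisj.1.symm, hdisj.2.2, hdisj.2.1⟩ hds.symm hvB)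
        · by_cases hvC : π[m]'hm ∈ C₀
          · set v := π[m]'hm with hv
            have hdagE' : IsDAG (Elev I π (m+1)) := Elev_dag hperm
            have hsink := sink_Elev hperm hm (I := I)
            have hvC' : v ∉ C₀.erase v := Finset.notMem_erase _ _
            by_cases hcB : ∀ b ∈ B, ¬ DConn (Elev I π (m+1)) (C₀.erase v) v b
            · exact case3core hG hem hperm hm ih A B C₀ hA hB hC hdisj hds hvC hcB
            · push_neg at hcB
              obtain ⟨b₀, hb₀, hcb₀⟩ := hcB
              have hcA : ∀ a ∈ A, ¬ DConn (Elev I π (m+1)) (C₀.erase v) v a := by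
                intro a ha hca
                have hglue := dconn_glue_sink hdagE' hsink hvC' hca.symm hcb₀
                rw [Finset.insert_erase hvC] at hglue
                exact hds a ha b₀ hb₀ hglue
              refine hG.symm _ _ _ (case3core hG hem hperm hm ih B A C₀ hB hA hC
                ⟨hdisj.1.symm, hdisj.2.2, hdisj.2.1⟩ hds.symm hvC hcA)
          · have hAs := subset_Vlev_of_not_mem hperm hm hA hvA
            have hBs := subset_Vlev_of_not_mem hperm hm hB hvB
            have hCs := subset_Vlev_of_not_mem hperm hm hC hvC
            refine ih A B C₀ hAs hBs hCs hdisj ?_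
            intro a ha b hb hconn
            exact hds a ha b hb
              (dconn_mono (Elev_mono (Nat.le_succ m)) (Elev_dag hperm) hconn)
    · have h1 : π.length ≤ m := Nat.le_of_not_lt hm
      intro A B C₀ hA hB hC hdisj hds
      refine ih A B C₀ ?_ ?_ ?_ hdisj ?_
      · rw [Vlev_of_ge hperm h1]; exact Finset.subset_univ _
      · rw [Vlev_of_ge hperm h1]; exact Finset.subset_univ _
      · rw [Vlev_of_ge hperm h1]; exact Finset.subset_univ _
      · rw [Elev_of_ge hperm h1]
        rwa [Elev_of_ge hperm (by omega)] at hds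

lemma markovian_RU (hG : Graphoid I)
    (hem : ∀ A C₀ : Finset V, Disjoint A C₀ → I A ∅ C₀)
    (hperm : IsPermList π) : Markovian (RUedges I π) I := by
  intro A B C₀ hdisj hds
  refine grand_induction hG hem hperm π.length A B C₀ ?_ ?_ ?_ hdisj ?_
  · rw [Vlev_of_ge hperm (le_refl _)]; exact Finset.subset_univ _
  · rw [Vlev_of_ge hperm (le_refl _)]; exact Finset.subset_univ _
  · rw [Vlev_of_ge hperm (le_refl _)]; exact Finset.subset_univ _
  · rwa [Elev_of_ge hperm (le_refl _)]

end MainInduction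

/-- if `π` is a causal order of a Markovian DAG `H`, then the RU-induced
DAG `G_π` is a subgraph of `H`; if moreover `H` is SGS-minimal, `G_π = H`. -/
theorem RU_subset_of_causal_order (I : IndepModel V) (hG : Graphoid I)
    (H : EdgeSet V) (hdag : IsDAG H) (hmk : Markovian H I)
    (π : List V) (hco : CausalOrder H π) :
    RUedges I π ⊆ H ∧ (H ∈ SGSmin I → RUedges I π = H) := by
  have hsub : RUedges I π ⊆ H := RU_subset_H hdag hmk hco
  refine ⟨hsub, fun hsgs => ?_⟩
  have hcmc : RUedges I π ∈ CMC I :=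
    ⟨RU_dag hco.1, markovian_RU hG (empty_indep hmk) hco.1⟩
  exact hsgs.2 (RUedges I π) hsub hcmc
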